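/- Let A and B be positive bounded operators on a complex Hilbert space H. Then the spectrum of the product AB is contained in [0, ∞) (viewing the spectrum as a subset of ℂ, every point of σ(AB) is a nonnegative real number). -/

import Mathlib

set_option synthInstance.maxHeartbeats 800000 in
set_option maxHeartbeats 1600000 in
open ComplexOrder in
/-- If `A` and `B` are positive bounded operators on a complex Hilbert
space, then every point of the spectrum of `AB` is a nonnegative real number. -/
theorem spectrum_product_of_positives_nonneg
    {H : Type*} [NormedAddCommGroup H] [InnerProductSpace ℂ H] [CompleteSpace H]
    (A B : H →L[ℂ] H) (hA : A.IsPositive) (hB : B.IsPositive) :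
    spectrum ℂ (A ∘L B) ⊆ {z : ℂ | 0 ≤ z.re ∧ z.im = 0} := by
  rw [← ContinuousLinearMap.nonneg_iff_isPositive] at hA hB
  set S := CFC.sqrt A with hS
  have hSnn : 0 ≤ S := CFC.sqrt_nonneg (a := A)
  have hSsa : IsSelfAdjoint S := .of_nonneg hSnn
  have hSS : S * S = A := CFC.sqrt_mul_sqrt_self A hA
  have hC : 0 ≤ S * B * S := by
    have := star_left_conjugate_nonneg hB S
    rwa [hSsa.star_eq] at this
  intro z hz
  by_cases hz0 : z = 0
  · simp [hz0, Set.mem_setOf_eq]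
  · have h1 : z ∈ spectrum ℂ (S * (S * B)) := by
      have : A ∘L B = S * (S * B) := by
        rw [← mul_assoc, hSS]; rfl
      rwa [this] at hz
    have h2 : z ∈ spectrum ℂ ((S * B) * S) := by
      have := spectrum.nonzero_mul_comm (𝕜 := ℂ) S (S * B)
      have hmem : z ∈ spectrum ℂ (S * (S * B)) \ {0} := ⟨h1, hz0⟩
      exact (this ▸ hmem).1
    rw [show (S * B) * S = S * B * S from rfl] at h2
    have hnn : 0 ≤ z := spectrum_nonneg_of_nonneg hC h2
    rw [Complex.le_def] at hnn
    exact ⟨hnn.1, hnn.2.symm⟩
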